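/- Let (p_i)_{i∈ℕ} be a sequence of distinct primes, (c_i)_{i∈ℕ} a sequence of integers, and (H_i)_{i∈ℕ} a sequence of thick subsets of ℕ. Then the set A := ⋃_{i=1}^{∞} ({m ∈ ℕ : m ≡ c_i (mod p_i)} ∩ H_i) is dynamically thick. Moreover, if for every n ∈ ℕ one has c_n ≢ 0 (mod p_n), and if for every n ∈ ℕ the set H_i ∩ (H_j − n) is empty for all but finitely many pairs (i,j) of distinct positive integers, then A is not an IP set. In particular, there exists a dynamically thick subset of ℕ that is not an IP set. -/

import Mathlib

/-- The set `A - n`, difference taken inside the positive integers: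
`A - n = {m : m >= 1 and m + n ∈ A}`. -/
def NSub (A : Set ℕ) (n : ℕ) : Set ℕ := {m : ℕ | 0 < m ∧ m + n ∈ A}

/-- `S ⊆ ℕ` is thick if every finite subset of `ℕ` has a translate inside `S`. -/
def Thick (S : Set ℕ) : Prop :=
  ∀ F : Finset ℕ, ∃ n : ℕ, 0 < n ∧ ∀ f ∈ F, f + n ∈ S

/-- A topological dynamical system: a nonempty compact metric space together with a
continuous self-map. -/
structure MetricDynSystem where
  carrier : Type
  [metric : MetricSpace carrier]
  [cpt : CompactSpace carrier]
  [carrier_nonempty : Nonempty carrier]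
  map : carrier → carrier
  continuous_map : Continuous map

attribute [instance] MetricDynSystem.metric MetricDynSystem.cpt MetricDynSystem.carrier_nonempty

/-- A system is minimal if every point has dense forward orbit `{T^n x : n ∈ ℕ}`. -/
def MetricDynSystem.Minimal (S : MetricDynSystem) : Prop :=
  ∀ x : S.carrier, Dense {y : S.carrier | ∃ n : ℕ, 0 < n ∧ S.map^[n] x = y}

/-- `A` is dynamically thick: for every minimal system, every point `x` and every
nonempty open `U`, some `n ∈ A` has `T^n x ∈ U`. -/
def DynThick (A : Set ℕ) : Prop :=
  ∀ S : MetricDynSystem, S.Minimal →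
    ∀ (x : S.carrier) (U : Set S.carrier), IsOpen U → U.Nonempty →
      ∃ n ∈ A, 0 < n ∧ S.map^[n] x ∈ U

/-- `A` is an IP set: it contains all finite sums of some sequence of positive
integers. -/
def IsIPSet (A : Set ℕ) : Prop :=
  ∃ x : ℕ → ℕ, (∀ i, 0 < x i) ∧ ∀ F : Finset ℕ, F.Nonempty → (∑ i ∈ F, x i) ∈ A



open Set

/-- Existence of a minimal nonempty closed invariant subset. -/
lemma exists_minimal_invariant {α : Type*} [TopologicalSpace α] [CompactSpace α] [T2Space α]
    [Nonempty α] {f : α → α} (hf : Continuous f) :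
    ∃ Y : Set α, Y.Nonempty ∧ IsClosed Y ∧ Set.MapsTo f Y Y ∧
      ∀ Z : Set α, Z ⊆ Y → Z.Nonempty → IsClosed Z → Set.MapsTo f Z Z → Z = Y := by
  classical
  set S : Set (Set α) := {Y | Y.Nonempty ∧ IsClosed Y ∧ Set.MapsTo f Y Y} with hS
  have hzorn := zorn_superset_nonempty S ?_ univ ⟨univ_nonempty, isClosed_univ, fun x _ => mem_univ _⟩
  · obtain ⟨m, -, hmS, hmin⟩ := hzorn
    exact ⟨m, hmS.1, hmS.2.1, hmS.2.2, fun Z hZm hZne hZcl hZinv =>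
      subset_antisymm hZm (hmin ⟨hZne, hZcl, hZinv⟩ hZm)⟩
  · intro c hcS hchain hcne
    refine ⟨⋂₀ c, ⟨?_, ?_, ?_⟩, fun s hs => sInter_subset_of_mem hs⟩
    · haveI : Nonempty c := hcne.to_subtype
      apply IsCompact.nonempty_sInter_of_directed_nonempty_isCompact_isClosed
      · intro u hu v hv
        rcases hchain.total hu hv with h | h
        · exact ⟨u, hu, le_refl _, h⟩
        · exact ⟨v, hv, h, le_refl _⟩
      · exact fun u hu => (hcS hu).1
      · exact fun u hu => (hcS hu).2.1.isCompact
      · exact fun u hu => (hcS hu).2.1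
    · exact isClosed_sInter fun u hu => (hcS hu).2.1
    · intro z hz
      exact fun u hu => (hcS hu).2.2 (hz u hu)

/-- In a minimal closed invariant set, every point visits every open set meeting it. -/
lemma visits_of_minimal {α : Type*} [TopologicalSpace α] {f : α → α} (hf : Continuous f)
    {Y : Set α} (hYcl : IsClosed Y) (hYinv : Set.MapsTo f Y Y)
    (hYmin : ∀ Z : Set α, Z ⊆ Y → Z.Nonempty → IsClosed Z → Set.MapsTo f Z Z → Z = Y)
    {V : Set α} (hV : IsOpen V) (hVY : (V ∩ Y).Nonempty) :
    ∀ z ∈ Y, ∃ n : ℕ, f^[n] z ∈ V := by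
  intro z hz
  set O : Set α := Set.range (fun n : ℕ => f^[n] z) with hO
  have hOY : O ⊆ Y := by
    rintro _ ⟨n, rfl⟩
    exact hYinv.iterate n hz
  have hclY : closure O ⊆ Y := hYcl.closure_subset_iff.mpr hOY
  have hinv : Set.MapsTo f (closure O) (closure O) := by
    intro w hw
    have h1 : f '' O ⊆ O := by
      rintro _ ⟨_, ⟨n, rfl⟩, rfl⟩
      exact ⟨n + 1, Function.iterate_succ_apply' f n z⟩
    have := image_closure_subset_closure_image (f := f) (s := O) hf
    exact closure_mono h1 (this ⟨w, hw, rfl⟩)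
  have hcne : (closure O).Nonempty := ⟨z, subset_closure ⟨0, rfl⟩⟩
  have hYeq : closure O = Y := hYmin _ hclY hcne isClosed_closure hinv
  obtain ⟨w, hwV, hwY⟩ := hVY
  have hwO : w ∈ closure O := hYeq.symm ▸ hwY
  obtain ⟨y, hyV, n, rfl⟩ := mem_closure_iff.mp hwO V hV hwV
  exact ⟨n, hyV⟩

/-- Uniformly bounded visiting times on a compact minimal set. -/
lemma syndetic_visits {α : Type*} [TopologicalSpace α] {f : α → α} (hf : Continuous f)
    {Y : Set α} (hYcpt : IsCompact Y) (hYcl : IsClosed Y) (hYinv : Set.MapsTo f Y Y)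
    (hYmin : ∀ Z : Set α, Z ⊆ Y → Z.Nonempty → IsClosed Z → Set.MapsTo f Z Z → Z = Y)
    {V : Set α} (hV : IsOpen V) (hVY : (V ∩ Y).Nonempty) :
    ∃ N : ℕ, ∀ z ∈ Y, ∃ n ≤ N, f^[n] z ∈ V := by
  have hvis := visits_of_minimal hf hYcl hYinv hYmin hV hVY
  have hcov : Y ⊆ ⋃ n : ℕ, (f^[n]) ⁻¹' V := by
    intro z hz
    obtain ⟨n, hn⟩ := hvis z hz
    exact mem_iUnion.mpr ⟨n, hn⟩
  obtain ⟨t, ht⟩ := hYcpt.elim_finite_subcover (fun n : ℕ => (f^[n]) ⁻¹' V)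
    (fun n => hV.preimage (hf.iterate n)) hcov
  refine ⟨t.sup id, fun z hz => ?_⟩
  obtain ⟨n, hnt, hn⟩ := mem_iUnion₂.mp (ht hz)
  exact ⟨n, Finset.le_sup (f := id) hnt, hn⟩


/-- Concrete family of thick sets. -/
def H0 (i : ℕ) : Set ℕ :=
  ⋃ k : ℕ, Set.Icc (4 ^ (Nat.pair i k)) (4 ^ (Nat.pair i k) + Nat.pair i k)

lemma H0_thick (i : ℕ) : Thick (H0 i) := by
  intro F
  set L := F.sup id with hL
  refine ⟨4 ^ (Nat.pair i L), pow_pos (by norm_num) _, fun f hf => ?_⟩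
  refine Set.mem_iUnion.mpr ⟨L, ?_⟩
  have hfL : f ≤ L := Finset.le_sup (f := id) hf
  have hLb : L ≤ Nat.pair i L := Nat.right_le_pair i L
  constructor
  · omega
  · omega

lemma H0_fin : ∀ n : ℕ, 0 < n →
    {q : ℕ × ℕ | q.1 ≠ q.2 ∧ (H0 q.1 ∩ NSub (H0 q.2) n).Nonempty}.Finite := by
  intro n hn
  apply Set.Finite.subset
    (((Set.finite_Iic n).prod (Set.finite_Iic n)).image
      (fun q : ℕ × ℕ => ((Nat.unpair q.1).1, (Nat.unpair q.2).1)))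
  rintro ⟨i, j⟩ ⟨hij, m, hmi, hm0, hmj⟩
  obtain ⟨k, hk⟩ := Set.mem_iUnion.mp hmi
  obtain ⟨l, hl⟩ := Set.mem_iUnion.mp hmj
  set a := Nat.pair i k with hadef
  set b := Nat.pair j l with hbdef
  obtain ⟨hk1, hk2⟩ := hk
  obtain ⟨hl1, hl2⟩ := hl
  have hab : a ≠ b := by
    intro h
    apply hij
    have : (i, k) = (j, l) := by
      rw [← Nat.unpair_pair i k, ← Nat.unpair_pair j l, ← hadef, ← hbdef, h]
    exact (Prod.mk.injEq _ _ _ _ ▸ this).1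
  have hba : ¬ b < a := by
    intro hba
    have h1 : 4 ^ (b + 1) ≤ 4 ^ a := Nat.pow_le_pow_right (by norm_num) hba
    have h2 : 4 ^ (b + 1) = 4 * 4 ^ b := by ring
    have h3 : b < 4 ^ b := Nat.lt_pow_self (by norm_num)
    omega
  have haltb : a < b := by omega
  have hbn : b ≤ n := by
    have hb1 : b - 1 + 1 = b := by omega
    have e1 : 4 * 4 ^ (b - 1) = 4 ^ b := by
      conv_rhs => rw [← hb1, pow_succ]
      ring
    have e2 : 4 ^ a ≤ 4 ^ (b - 1) := Nat.pow_le_pow_right (by norm_num) (by omega)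
    have e4 : b - 1 < 4 ^ (b - 1) := Nat.lt_pow_self (by norm_num)
    omega
  refine ⟨(a, b), ⟨?_, ?_⟩, ?_⟩
  · simp only [Set.mem_Iic]; omega
  · simp only [Set.mem_Iic]; omega
  · simp [hadef, hbdef, Nat.unpair_pair]


lemma FS_exists_finset {a : Stream' ℕ} {m : ℕ} (h : m ∈ Hindman.FS a) :
    ∃ F : Finset ℕ, F.Nonempty ∧ m = ∑ k ∈ F, a.get k := by
  induction h with
  | head' a => exact ⟨{0}, ⟨0, Finset.mem_singleton_self 0⟩, by simp [Stream'.head]⟩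
  | tail' a m h ih =>
      obtain ⟨F, hne, hsum⟩ := ih
      refine ⟨F.image (· + 1), hne.image _, ?_⟩
      rw [Finset.sum_image (by intro x _ y _ h; simpa using h)]
      simpa [Stream'.get_tail] using hsum
  | cons' a m h ih =>
      obtain ⟨F, hne, hsum⟩ := ih
      refine ⟨insert 0 (F.image (· + 1)), Finset.insert_nonempty _ _, ?_⟩
      rw [Finset.sum_insert (by simp), Finset.sum_image (by intro x _ y _ h; simpa using h)]
      simp only [Stream'.get_tail] at hsum
      simp [Stream'.head, hsum]

lemma part2 (p : ℕ → ℕ) (hp : ∀ i, Nat.Prime (p i)) (hpinj : Function.Injective p)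
    (c : ℕ → ℤ) (H : ℕ → Set ℕ)
    (h0 : ∀ n : ℕ, ¬ (c n ≡ 0 [ZMOD (p n : ℤ)]))
    (hfin : ∀ n : ℕ, 0 < n →
      {q : ℕ × ℕ | q.1 ≠ q.2 ∧ (H q.1 ∩ NSub (H q.2) n).Nonempty}.Finite) :
    ¬ IsIPSet (⋃ i : ℕ, ({m : ℕ | (m : ℤ) ≡ c i [ZMOD (p i : ℤ)]} ∩ H i)) := by
  classical
  rintro ⟨x, hxpos, hxsum⟩
  set A : Set ℕ := ⋃ i : ℕ, ({m : ℕ | (m : ℤ) ≡ c i [ZMOD (p i : ℤ)]} ∩ H i) with hA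
  set cell : ℕ → Set ℕ := fun i => {m : ℕ | (m : ℤ) ≡ c i [ZMOD (p i : ℤ)]} ∩ H i with hcell
  have hx0 : 0 < x 0 := hxpos 0
  set Epairs := {q : ℕ × ℕ | q.1 ≠ q.2 ∧ (H q.1 ∩ NSub (H q.2) (x 0)).Nonempty} with hEp
  have hEfin : Epairs.Finite := hfin (x 0) hx0
  set I₀ : Set ℕ := (Prod.fst '' Epairs) ∪ {i | p i ∣ x 0} with hI₀
  have hI₀fin : I₀.Finite := by
    refine (hEfin.image _).union ?_
    have hdiv : {d : ℕ | d ∣ x 0}.Finite :=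
      (Set.finite_Iic (x 0)).subset (fun d hd => Nat.le_of_dvd hx0 hd)
    have : {i | p i ∣ x 0} = p ⁻¹' {d | d ∣ x 0} := rfl
    rw [this]
    exact Set.Finite.preimage (hpinj.injOn) hdiv
  -- key claim
  have hclaim : ∀ i m, 0 < m → m ∈ cell i → m + x 0 ∈ A → i ∈ I₀ := by
    intro i m hm hmi hmA
    obtain ⟨j, hj⟩ := Set.mem_iUnion.mp hmA
    by_cases hij : i = j
    · subst hij
      right
      have h1 : (m : ℤ) ≡ c i [ZMOD (p i : ℤ)] := hmi.1
      have h2 : ((m + x 0 : ℕ) : ℤ) ≡ c i [ZMOD (p i : ℤ)] := hj.1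
      have h3 : ((m + x 0 : ℕ) : ℤ) ≡ (m : ℤ) [ZMOD (p i : ℤ)] := h2.trans h1.symm
      have h4 : (p i : ℤ) ∣ (m : ℤ) - ((m + x 0 : ℕ) : ℤ) := h3.dvd
      have h5 : (p i : ℤ) ∣ (x 0 : ℤ) := by
        have : ((m : ℤ) - ((m + x 0 : ℕ) : ℤ)) = -(x 0 : ℤ) := by push_cast; ring
        rw [this] at h4
        exact (dvd_neg).mp h4
      exact_mod_cast Int.natCast_dvd_natCast.mp h5
    · left
      refine ⟨(i, j), ⟨hij, m, hmi.2, hm, hj.2⟩, rfl⟩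
  -- stream
  set a : Stream' ℕ := fun k => x (k + 1) with ha
  have hsumsA : ∀ m ∈ Hindman.FS a, 0 < m ∧ m ∈ A ∧ m + x 0 ∈ A := by
    intro m hm
    obtain ⟨F, hFne, hFsum⟩ := FS_exists_finset hm
    have hget : ∀ k, a.get k = x (k + 1) := fun k => rfl
    have hmsum : m = ∑ k ∈ F, x (k + 1) := by rw [hFsum]; exact Finset.sum_congr rfl fun k _ => hget k
    have hmpos : 0 < m := by
      rw [hmsum]
      exact Finset.sum_pos (fun k _ => hxpos (k + 1)) hFne
    have hinj : ∀ u ∈ F, ∀ v ∈ F, u + 1 = v + 1 → u = v := by omega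
    have him : m = ∑ j ∈ F.image (· + 1), x j := by
      rw [Finset.sum_image hinj, hmsum]
    have h0notin : (0 : ℕ) ∉ F.image (· + 1) := by simp
    have hmA : m ∈ A := by
      rw [him]; exact hxsum _ (hFne.image _)
    have hmxA : m + x 0 ∈ A := by
      have : m + x 0 = ∑ j ∈ insert 0 (F.image (· + 1)), x j := by
        rw [Finset.sum_insert h0notin, ← him]; ring
      rw [this]
      exact hxsum _ (Finset.insert_nonempty _ _)
    exact ⟨hmpos, hmA, hmxA⟩
  set s : Set (Set ℕ) := (fun i => cell i) '' I₀ with hs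
  have hsfin : s.Finite := hI₀fin.image _
  have hscov : Hindman.FS a ⊆ ⋃₀ s := by
    intro m hm
    obtain ⟨hmpos, hmA, hmxA⟩ := hsumsA m hm
    obtain ⟨i, hi⟩ := Set.mem_iUnion.mp hmA
    exact ⟨cell i, Set.mem_image_of_mem _ (hclaim i m hmpos hi hmxA), hi⟩
  obtain ⟨cs, hcs, b, hFSb⟩ := Hindman.FS_partition_regular a s hsfin hscov
  obtain ⟨i, hiI, rfl⟩ := hcs
  have hu : b.head ∈ cell i := hFSb (Hindman.FS.head b)
  have hv : b.tail.head ∈ cell i := hFSb (Hindman.FS.tail b _ (Hindman.FS.head b.tail))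
  have huv : b.head + b.tail.head ∈ cell i := hFSb (Hindman.FS.cons b _ (Hindman.FS.head b.tail))
  have h1 : ((b.head : ℕ) : ℤ) ≡ c i [ZMOD (p i : ℤ)] := hu.1
  have h2 : ((b.tail.head : ℕ) : ℤ) ≡ c i [ZMOD (p i : ℤ)] := hv.1
  have h3 : ((b.head + b.tail.head : ℕ) : ℤ) ≡ c i [ZMOD (p i : ℤ)] := huv.1
  have h4 : ((b.tail.head : ℕ) : ℤ) ≡ 0 [ZMOD (p i : ℤ)] := by
    have := h3.sub h1
    have heq : ((b.head + b.tail.head : ℕ) : ℤ) - ((b.head : ℕ) : ℤ) = ((b.tail.head : ℕ) : ℤ) := by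
      push_cast; ring
    rw [heq, sub_self] at this
    exact this
  exact h0 i (h2.symm.trans h4)

lemma part1 (p : ℕ → ℕ) (hp : ∀ i, Nat.Prime (p i)) (hpinj : Function.Injective p)
    (c : ℕ → ℤ) (H : ℕ → Set ℕ) (hH : ∀ i, Thick (H i)) :
    DynThick (⋃ i : ℕ, ({m : ℕ | (m : ℤ) ≡ c i [ZMOD (p i : ℤ)]} ∩ H i)) := by
  classical
  intro S hmin x U hU hUne
  haveI hNZ : ∀ i, NeZero (p i) := fun i => ⟨(hp i).pos.ne'⟩
  letI instT : ∀ i, TopologicalSpace (ZMod (p i)) := fun _ => ⊥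
  haveI instD : ∀ i, DiscreteTopology (ZMod (p i)) := fun i => ⟨rfl⟩
  haveI : ∀ i, CompactSpace (ZMod (p i)) := by infer_instance
  haveI : T2Space (∀ i, ZMod (p i)) := by infer_instance
  haveI : LocallyCompactSpace (∀ i, ZMod (p i)) := by infer_instance
  haveI : BaireSpace (∀ i, ZMod (p i)) := by infer_instance
  -- Chinese remainder theorem
  have hcrt : ∀ (J : Finset ℕ) (t : ∀ i, ZMod (p i)), ∃ n : ℕ, ∀ j ∈ J,
      ((n : ℕ) : ZMod (p j)) = t j := by
    intro J t
    have hs : ∀ j ∈ J, p j ≠ 0 := fun j _ => (hp j).pos.ne'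
    have pp : Set.Pairwise (J : Set ℕ) (Function.onFun Nat.Coprime p) := by
      intro i _ j _ hij
      exact (Nat.coprime_primes (hp i) (hp j)).mpr fun h => hij (hpinj h)
    obtain ⟨n, hn⟩ := Nat.chineseRemainderOfFinset (fun j => (t j).val) p J hs pp
    refine ⟨n, fun j hj => ?_⟩
    have := (ZMod.natCast_eq_natCast_iff _ _ _).mpr (hn j hj)
    rwa [ZMod.natCast_val, ZMod.cast_id] at this
  -- the skew product system
  let f : S.carrier × (∀ i, ZMod (p i)) → S.carrier × (∀ i, ZMod (p i)) :=
    fun w => (S.map w.1, fun i => w.2 i + 1)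
  have hf : Continuous f := by
    apply Continuous.prodMk
    · exact S.continuous_map.comp continuous_fst
    · exact continuous_pi fun i =>
        (continuous_of_discreteTopology (f := fun a : ZMod (p i) => a + 1)).comp
          ((continuous_apply i).comp continuous_snd)
  have hiter : ∀ (n : ℕ) (w : S.carrier × (∀ i, ZMod (p i))),
      f^[n] w = (S.map^[n] w.1, fun i => w.2 i + ((n : ℕ) : ZMod (p i))) := by
    intro n
    induction n with
    | zero =>
        intro w
        simp only [Function.iterate_zero_apply, Nat.cast_zero, add_zero]
    | succ n ih =>
        intro w
        rw [Function.iterate_succ_apply, ih]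
        refine Prod.ext_iff.mpr ⟨?_, ?_⟩
        · exact (Function.iterate_succ_apply S.map n w.1).symm
        · funext i
          show w.2 i + 1 + ((n : ℕ) : ZMod (p i)) = w.2 i + (((n + 1 : ℕ)) : ZMod (p i))
          push_cast
          ring
  obtain ⟨Y, hYne, hYcl, hYinv, hYmin⟩ := exists_minimal_invariant hf
  have hYcpt : IsCompact Y := hYcl.isCompact
  -- the first projection of Y is everything
  have hfst : ∀ z : S.carrier, ∃ g, (z, g) ∈ Y := by
    have hCcl : IsClosed (Prod.fst '' Y) := (hYcpt.image continuous_fst).isClosed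
    have hCinv : Set.MapsTo S.map (Prod.fst '' Y) (Prod.fst '' Y) := by
      rintro _ ⟨w, hw, rfl⟩
      exact ⟨f w, hYinv hw, rfl⟩
    have hCne : (Prod.fst '' Y).Nonempty := hYne.image _
    have hCuniv : Prod.fst '' Y = univ := by
      obtain ⟨z, hz⟩ := hCne
      have horb : {y | ∃ n : ℕ, 0 < n ∧ S.map^[n] z = y} ⊆ Prod.fst '' Y := by
        rintro y ⟨n, -, rfl⟩
        exact hCinv.iterate n hz
      have hd : Dense (Prod.fst '' Y) := Dense.mono horb (hmin z)
      rw [← hCcl.closure_eq]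
      exact hd.closure_eq
    intro z
    have hz : z ∈ Prod.fst '' Y := hCuniv ▸ mem_univ z
    obtain ⟨⟨w1, w2⟩, hw, rfl⟩ := hz
    exact ⟨w2, hw⟩
  obtain ⟨gs, hgs⟩ := hfst x
  -- the second projection of Y is everything
  have hsnd : ∀ g : ∀ i, ZMod (p i), ∃ z, (z, g) ∈ Y := by
    have hC : Dense (Prod.snd '' Y) := by
      rw [dense_iff_inter_open]
      intro O hO hOne
      obtain ⟨h, hh⟩ := hOne
      obtain ⟨J, u, hu, hpi⟩ := isOpen_pi_iff.mp hO h hh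
      obtain ⟨n, hn⟩ := hcrt J (fun j => h j - gs j)
      refine ⟨(fun i => gs i + ((n : ℕ) : ZMod (p i))), ?_, ?_⟩
      · apply hpi
        intro j hj
        have heq : gs j + ((n : ℕ) : ZMod (p j)) = h j := by rw [hn j hj]; ring
        show gs j + ((n : ℕ) : ZMod (p j)) ∈ u j
        rw [heq]
        exact (hu j hj).2
      · have hY' : f^[n] (x, gs) ∈ Y := hYinv.iterate n hgs
        rw [hiter] at hY'
        exact ⟨_, hY', rfl⟩
    have hCcl : IsClosed (Prod.snd '' Y) := (hYcpt.image continuous_snd).isClosed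
    have hCuniv : Prod.snd '' Y = univ := by
      rw [← hCcl.closure_eq]; exact hC.closure_eq
    intro g
    have hg : g ∈ Prod.snd '' Y := hCuniv ▸ mem_univ g
    obtain ⟨⟨z1, z2⟩, hw, rfl⟩ := hg
    exact ⟨z1, hw⟩
  -- uniform visits to U ×ˢ univ
  obtain ⟨u0, hu0⟩ := hUne
  obtain ⟨g0, hg0Y⟩ := hfst u0
  have hVY : ((U ×ˢ (univ : Set (∀ i, ZMod (p i)))) ∩ Y).Nonempty :=
    ⟨(u0, g0), ⟨hu0, trivial⟩, hg0Y⟩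
  obtain ⟨N, hN⟩ := syndetic_visits hf hYcpt hYcl hYinv hYmin (hU.prod isOpen_univ) hVY
  -- Baire category argument
  let D : Set (∀ i, ZMod (p i)) := Prod.snd '' (Y ∩ (U ×ˢ (univ : Set (∀ i, ZMod (p i)))))
  let T : ℕ → Set (∀ i, ZMod (p i)) :=
    fun n => {g | (fun i => g i + ((n : ℕ) : ZMod (p i))) ∈ closure D}
  have hTcl : ∀ n : ℕ, IsClosed (T n) := by
    intro n
    have hτ : Continuous (fun g : ∀ i, ZMod (p i) => fun i => g i + ((n : ℕ) : ZMod (p i))) :=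
      continuous_pi fun i =>
        (continuous_of_discreteTopology (f := fun a : ZMod (p i) => a + ((n : ℕ) : ZMod (p i)))).comp
          (continuous_apply i)
    exact isClosed_closure.preimage hτ
  have hTcov : (⋃ k : Fin (N + 1), T (k : ℕ)) = univ := by
    apply eq_univ_of_forall
    intro g
    obtain ⟨z, hz⟩ := hsnd g
    obtain ⟨n, hnN, hfn⟩ := hN (z, g) hz
    have hmem : (fun i => g i + ((n : ℕ) : ZMod (p i))) ∈ D := by
      have hY' : f^[n] (z, g) ∈ Y := hYinv.iterate n hz
      refine ⟨f^[n] (z, g), ⟨hY', hfn⟩, ?_⟩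
      rw [hiter]
    exact mem_iUnion.mpr ⟨⟨n, Nat.lt_succ_of_le hnN⟩, subset_closure hmem⟩
  have hbaire := nonempty_interior_of_iUnion_of_closed
    (f := fun k : Fin (N + 1) => T (k : ℕ)) (fun k => hTcl _) hTcov
  obtain ⟨k0, h₀, hh₀⟩ := hbaire
  obtain ⟨J, u, hu, hpi⟩ := isOpen_pi_iff.mp isOpen_interior h₀ hh₀
  obtain ⟨i, hiJ⟩ := Infinite.exists_notMem_finset J
  -- build a point of D with prescribed i-th coordinate
  set tgt : ZMod (p i) := gs i + ((c i : ℤ) : ZMod (p i)) with htgt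
  set h₁ : ∀ i', ZMod (p i') :=
    Function.update h₀ i (tgt - (((k0 : ℕ) : ℕ) : ZMod (p i))) with hh₁def
  have hh₁ : h₁ ∈ interior (T (k0 : ℕ)) := by
    apply hpi
    intro j hj
    have hji : j ≠ i := fun e => hiJ (e ▸ hj)
    have : h₁ j = h₀ j := Function.update_of_ne hji _ _
    rw [this]
    exact (hu j hj).2
  have hq' : h₁ ∈ T (k0 : ℕ) := interior_subset hh₁
  have hq : (fun i' => h₁ i' + (((k0 : ℕ) : ℕ) : ZMod (p i'))) ∈ closure D := hq'
  have hqi : h₁ i + (((k0 : ℕ) : ℕ) : ZMod (p i)) = tgt := by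
    rw [hh₁def, Function.update_self]
    ring
  set W : Set (∀ i', ZMod (p i')) := {g | g i = tgt} with hW
  have hWopen : IsOpen W := by
    have : W = (fun g : ∀ i', ZMod (p i') => g i) ⁻¹' {tgt} := rfl
    rw [this]
    exact (isOpen_discrete _).preimage (continuous_apply i)
  have hqW : (fun i' => h₁ i' + (((k0 : ℕ) : ℕ) : ZMod (p i'))) ∈ W := hqi
  obtain ⟨g1, hg1W, hg1D⟩ := mem_closure_iff.mp hq W hWopen hqW
  obtain ⟨⟨w1, w2⟩, ⟨hwY, hwV⟩, rfl⟩ := hg1D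
  -- uniform visits to U ×ˢ W
  have hV'Y : ((U ×ˢ W) ∩ Y).Nonempty := ⟨(w1, w2), ⟨hwV.1, hg1W⟩, hwY⟩
  obtain ⟨N', hN'⟩ := syndetic_visits hf hYcpt hYcl hYinv hYmin (hU.prod hWopen) hV'Y
  obtain ⟨m, hm0, hmH⟩ := hH i (Finset.range (N' + 1))
  have hzY : f^[m] (x, gs) ∈ Y := hYinv.iterate m hgs
  obtain ⟨k, hkN', hk⟩ := hN' _ hzY
  rw [← Function.iterate_add_apply] at hk
  rw [hiter] at hk
  have hkU : S.map^[k + m] x ∈ U := hk.1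
  have hkW : gs i + (((k + m : ℕ)) : ZMod (p i)) = tgt := hk.2
  have hcong : ((k + m : ℕ) : ℤ) ≡ c i [ZMOD (p i : ℤ)] := by
    have h3 : gs i + (((k + m : ℕ)) : ZMod (p i)) = gs i + ((c i : ℤ) : ZMod (p i)) := hkW
    have h4 : (((k + m : ℕ)) : ZMod (p i)) = ((c i : ℤ) : ZMod (p i)) := by
      exact add_left_cancel h3
    have h5 : (((k + m : ℕ) : ℤ) : ZMod (p i)) = ((c i : ℤ) : ZMod (p i)) := by
      rw [Int.cast_natCast]; exact h4
    exact (ZMod.intCast_eq_intCast_iff _ _ _).mp h5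
  refine ⟨k + m, Set.mem_iUnion.mpr ⟨i, hcong,
    hmH k (Finset.mem_range.mpr (Nat.lt_succ_of_le hkN'))⟩, by omega, hkU⟩

theorem dynThick_of_prime_progressions_inter_thick
    (p : ℕ → ℕ) (hp : ∀ i, Nat.Prime (p i)) (hpinj : Function.Injective p)
    (c : ℕ → ℤ) (H : ℕ → Set ℕ) (hH : ∀ i, Thick (H i)) :
    DynThick (⋃ i : ℕ, ({m : ℕ | (m : ℤ) ≡ c i [ZMOD (p i : ℤ)]} ∩ H i)) ∧
      ((∀ n : ℕ, ¬ (c n ≡ 0 [ZMOD (p n : ℤ)])) →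
        (∀ n : ℕ, 0 < n →
          {q : ℕ × ℕ | q.1 ≠ q.2 ∧ (H q.1 ∩ NSub (H q.2) n).Nonempty}.Finite) →
        ¬ IsIPSet (⋃ i : ℕ, ({m : ℕ | (m : ℤ) ≡ c i [ZMOD (p i : ℤ)]} ∩ H i))) ∧
      (∃ A : Set ℕ, DynThick A ∧ ¬ IsIPSet A) := by
  have hp0 : ∀ i, Nat.Prime (Nat.nth Nat.Prime i) := Nat.prime_nth_prime
  have hinj0 : Function.Injective (Nat.nth Nat.Prime) :=
    Nat.nth_injective Nat.infinite_setOf_prime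
  have h00 : ∀ n : ℕ, ¬ ((fun _ : ℕ => (1 : ℤ)) n ≡ 0 [ZMOD (Nat.nth Nat.Prime n : ℤ)]) := by
    intro n h
    have hd : ((Nat.nth Nat.Prime n : ℤ)) ∣ (0 - 1) := h.dvd
    rw [zero_sub] at hd
    have h1 : ((Nat.nth Nat.Prime n : ℤ)) ∣ 1 := (dvd_neg).mp hd
    have h2 : ((Nat.nth Nat.Prime n : ℤ)) ≤ 1 := Int.le_of_dvd one_pos h1
    have h3 : (2 : ℤ) ≤ (Nat.nth Nat.Prime n : ℤ) := by exact_mod_cast (hp0 n).two_le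
    omega
  exact ⟨part1 p hp hpinj c H hH,
    fun h0 hfin => part2 p hp hpinj c H h0 hfin,
    ⟨⋃ i : ℕ, ({m : ℕ | (m : ℤ) ≡ (fun _ : ℕ => (1 : ℤ)) i [ZMOD (Nat.nth Nat.Prime i : ℤ)]} ∩ H0 i),
      part1 _ hp0 hinj0 _ H0 H0_thick,
      part2 _ hp0 hinj0 _ H0 h00 H0_fin⟩⟩
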